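/- Let r ≥ 5 and γ > 0, and let G be a digraph on n vertices (n sufficiently large) in which every vertex has out-degree at least (1 − 1/((2r−3)r) + γ)n. Then G contains a perfect fractional (r, r−2)-tiling: a function ω* from the set of copies of members of K_{r,r−2} in G to [0,1] such that for every vertex v, the total weight of copies containing v equals exactly 1. -/

import Mathlib

/-- `S` spans a member of `K_{r,s}(G)`: `r` vertices, complete base graph and minimum
out-degree at least `s` inside `S`. -/
def IsKrs {n : ℕ} (G : Fin n → Fin n → Prop) (r s : ℕ) (S : Finset (Fin n)) : Prop :=
  S.card = r ∧ (∀ x ∈ S, ∀ y ∈ S, x ≠ y → G x y ∨ G y x) ∧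
    (∀ x ∈ S, s ≤ Set.ncard {y | y ∈ S ∧ G x y})

open Finset
lemma topsum (y : ℕ → ℝ) (hy : Antitone y) (m n : ℕ) (hmn : m ≤ n) :
    (m : ℝ) * (∑ j ∈ range n, y j) ≤ (n : ℝ) * ∑ j ∈ range m, y j := by
  rcases Nat.eq_zero_or_pos m with hm | hm
  · simp [hm]
  have hsplit : ∑ j ∈ range n, y j = (∑ j ∈ range m, y j) + ∑ j ∈ Ico m n, y j := by
    simp only [range_eq_Ico]; exact (Finset.sum_Ico_consecutive _ (Nat.zero_le m) hmn).symm
  have hA : (m : ℝ) * y (m - 1) ≤ ∑ j ∈ range m, y j := by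
    calc (m : ℝ) * y (m-1) = ∑ _j ∈ range m, y (m-1) := by simp [mul_comm]
    _ ≤ ∑ j ∈ range m, y j := Finset.sum_le_sum fun j hj => hy (by simp at hj; omega)
  have hB : ∑ j ∈ Ico m n, y j ≤ ((n : ℝ) - m) * y (m - 1) := by
    calc ∑ j ∈ Ico m n, y j ≤ ∑ _j ∈ Ico m n, y (m-1) :=
          Finset.sum_le_sum fun j hj => hy (by simp at hj; omega)
    _ = ((n : ℝ) - m) * y (m-1) := by
        rw [Finset.sum_const, Nat.card_Ico, nsmul_eq_mul, Nat.cast_sub hmn]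
  have hmn' : (m : ℝ) ≤ n := Nat.cast_le.2 hmn
  have hm0 : (0:ℝ) ≤ m := Nat.cast_nonneg m
  nlinarith [mul_le_mul_of_nonneg_left hB hm0, mul_le_mul_of_nonneg_left hA (sub_nonneg.2 hmn')]

lemma blocksum (y : ℕ → ℝ) (hy : Antitone y) (q : ℕ) :
    ∀ r : ℕ, ∑ j ∈ range (r * q), y j ≤ (q : ℝ) * ∑ i ∈ range r, y (i * q) := by
  intro r
  induction r with
  | zero => simp
  | succ r ih =>
    have e : (r+1) * q = r*q + q := by ring
    have hsplit : ∑ j ∈ range ((r+1) * q), y j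
        = (∑ j ∈ range (r * q), y j) + ∑ j ∈ Ico (r*q) (r*q + q), y j := by
      rw [e]; simp only [range_eq_Ico]
      exact (Finset.sum_Ico_consecutive _ (Nat.zero_le _) (by omega : r*q ≤ r*q + q)).symm
    have hblock : ∑ j ∈ Ico (r*q) (r*q + q), y j ≤ (q : ℝ) * y (r*q) := by
      calc ∑ j ∈ Ico (r*q) (r*q+q), y j ≤ ∑ _j ∈ Ico (r*q) (r*q+q), y (r*q) :=
            Finset.sum_le_sum fun j hj => hy (by simp at hj; omega)
      _ = (q:ℝ) * y (r*q) := by rw [Finset.sum_const, nsmul_eq_mul]; norm_num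
    rw [hsplit, Finset.sum_range_succ, mul_add]
    linarith

lemma sorted_pos (y : ℕ → ℝ) (hy : Antitone y) {q r n : ℕ} (hq : 1 ≤ q) (hr : 0 < r)
    (hrq : r * q ≤ n) (hpos : 0 < ∑ j ∈ range n, y j) :
    0 < ∑ i ∈ range r, y (i * q) := by
  have h1 := topsum y hy (r*q) n hrq
  have h2 := blocksum y hy q r
  have hn : (0:ℝ) < (n:ℕ) := by
    have : 0 < n := lt_of_lt_of_le (Nat.mul_pos hr hq) hrq
    exact_mod_cast this
  have hrq0 : (0:ℝ) < ((r*q : ℕ) : ℝ) := by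
    have : 0 < r*q := Nat.mul_pos hr hq
    exact_mod_cast this
  have hq0 : (0:ℝ) < (q:ℕ) := by exact_mod_cast hq
  nlinarith [mul_pos hrq0 hpos, mul_le_mul_of_nonneg_left h2 (le_of_lt hn), mul_pos hn hq0]


lemma exists_sorted (y : Fin n → ℝ) : ∃ σ : Equiv.Perm (Fin n), Antitone (fun i => y (σ i)) := by
  refine ⟨Tuple.sort (fun i => - y i), fun a b hab => ?_⟩
  have := Tuple.monotone_sort (fun i => - y i) hab
  simpa using this

lemma pick_lemma (y : Fin n → ℝ) (σ : Equiv.Perm (Fin n)) (hσ : Antitone (fun i => y (σ i)))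
    (X : Finset (Fin n)) (m : ℕ) (hm : m < n) (hX : X.card ≤ m) :
    ∃ u, u ∉ X ∧ y (σ ⟨m, hm⟩) ≤ y u := by
  classical
  set F : Finset (Fin n) := Finset.image (fun k : Fin (m+1) => σ (Fin.castLE hm k)) Finset.univ with hF
  have hinj : Function.Injective (fun k : Fin (m+1) => σ (Fin.castLE hm k)) := by
    intro a b hab
    simp only at hab
    have := σ.injective hab
    exact Fin.castLE_injective hm this
  have hcard : F.card = m + 1 := by
    rw [hF, Finset.card_image_of_injective _ hinj, Finset.card_univ, Fintype.card_fin]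
  have : ¬ (F ⊆ X) := fun h => by
    have := Finset.card_le_card h; omega
  obtain ⟨u, huF, huX⟩ := Finset.not_subset.1 this
  refine ⟨u, huX, ?_⟩
  obtain ⟨k, _, rfl⟩ := Finset.mem_image.1 huF
  exact hσ (by simp [Fin.le_def]; omega)


-- numeric core
set_option maxHeartbeats 1000000 in
lemma numeric_core (r q n : ℕ) (γ : ℝ) (hr : 5 ≤ r) (hγ : 0 < γ)
    (hqlt : (n:ℝ) < r * q + r) (hnγ : 2 * (r:ℝ) ≤ γ * n) (hn0 : 0 < n) :
    ∀ i : ℕ, i ≤ r - 2 →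
      1 + ((1 / ((2 * (r:ℝ) - 3) * r) - γ) * n / (1 / (2 * (r:ℝ) - 4))
        + (1 / ((2 * (r:ℝ) - 3) * r) - γ) * n)
        + i * (1 + ((1 / ((2 * (r:ℝ) - 3) * r) - γ) * n + (1 / (2 * (r:ℝ) - 4)) * n))
        ≤ (((i+1) * q : ℕ) : ℝ) := by
  intro i hi
  set R : ℝ := (r:ℝ) with hR
  have hR5 : (5:ℝ) ≤ R := by rw [hR]; exact_mod_cast hr
  have hRpos : 0 < R := by linarith
  have h23 : (2*R-3) ≠ 0 := by linarith
  have h24 : (2*R-4) ≠ 0 := by linarith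
  have hR0 : R ≠ 0 := by linarith
  set ε : ℝ := 1 / ((2 * R - 3) * R) with hε
  set δ : ℝ := 1 / (2 * R - 4) with hδ
  have hn' : (0:ℝ) ≤ n := Nat.cast_nonneg n
  have hI : (0:ℝ) ≤ (i:ℝ) := Nat.cast_nonneg i
  have hIR : (i:ℝ) ≤ R - 2 := by
    have h2 : (i:ℝ) ≤ ((r-2 : ℕ):ℝ) := Nat.cast_le.2 hi
    have : ((r-2:ℕ):ℝ) = R - 2 := by rw [hR]; push_cast [Nat.cast_sub (by omega : 2 ≤ r)]; ring
    linarith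
  have f1 : (ε-γ)/δ + (ε-γ) = 1/R - γ*(2*R-3) := by
    rw [hε, hδ]; field_simp; ring
  have hkey : 0 ≤ 2*R^2 - 13*R + 16 := by nlinarith [sq_nonneg (R-5)]
  have f2 : ε + δ ≤ 1/R := by
    have hd1 : (0:ℝ) < (2*R-3)*R := by nlinarith
    have hd2 : (0:ℝ) < 2*R-4 := by linarith
    rw [hε, hδ, div_add_div _ _ (ne_of_gt hd1) h24, div_le_div_iff₀ (by positivity) hRpos]
    nlinarith [mul_nonneg (le_of_lt hRpos) hkey]
  have f3 : (n:ℝ)/R - 1 < (q:ℕ) := by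
    have h4 : (n:ℝ)/R < q + 1 := by rw [div_lt_iff₀ hRpos]; nlinarith [hqlt]
    linarith
  have f5 : γ * n ≤ γ*(2*R-3) * n := by nlinarith [mul_nonneg (mul_nonneg hγ.le (by linarith : (0:ℝ) ≤ 2*R-4)) hn']
  have hcast : (((i+1) * q : ℕ) : ℝ) = ((i:ℝ)+1) * (q:ℕ) := by push_cast; ring
  rw [hcast]
  have e1 : (ε-γ)*n/δ + (ε-γ)*n = n/R - γ*(2*R-3)*n := by
    calc (ε-γ)*n/δ + (ε-γ)*n = ((ε-γ)/δ + (ε-γ))*n := by ring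
    _ = (1/R - γ*(2*R-3))*n := by rw [f1]
    _ = n/R - γ*(2*R-3)*n := by ring
  have hIn : (i:ℝ)*((ε+δ)*n) ≤ (i:ℝ)*((n:ℝ)/R) := by
    refine mul_le_mul_of_nonneg_left ?_ hI
    calc (ε+δ)*(n:ℝ) ≤ (1/R)*n := mul_le_mul_of_nonneg_right f2 hn'
    _ = (n:ℝ)/R := by ring
  have hγI : 0 ≤ (i:ℝ)*(γ*n) := by positivity
  have hq2 : ((i:ℝ)+1)*((n:ℝ)/R - 1) < ((i:ℝ)+1)*(q:ℕ) :=
    mul_lt_mul_of_pos_left f3 (by linarith)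
  have hobs : (i:ℝ)*(1 + ((ε-γ)*n + δ*n)) = (i:ℝ) + (i:ℝ)*((ε+δ)*n) - (i:ℝ)*(γ*n) := by ring
  rw [e1, hobs]
  clear_value ε δ R
  linarith [hIn, hγI, hq2, f5, hnγ, hIR]

set_option maxHeartbeats 2000000 in
open Classical in
lemma key {n : ℕ} (r : ℕ) (γ : ℝ) (hr : 5 ≤ r) (hγ : 0 < γ) (G : Fin n → Fin n → Prop)
    (hdeg : ∀ v : Fin n, (1 - 1 / ((2 * (r:ℝ) - 3) * r) + γ) * n
      ≤ ((Set.ncard {w | G v w}) : ℝ))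
    (hnr : r ≤ n) (hnγ : 2 * (r:ℝ) ≤ γ * n)
    (y : Fin n → ℝ) (hy : 0 < ∑ v, y v) :
    ∃ S : Finset (Fin n), IsKrs G r (r - 2) S ∧ 0 < ∑ v ∈ S, y v := by
  have hn0 : 0 < n := by omega
  set ε : ℝ := 1 / ((2 * (r:ℝ) - 3) * r) with hε
  set δ : ℝ := 1 / (2 * (r:ℝ) - 4) with hδ
  have hR5 : (5:ℝ) ≤ (r:ℝ) := by exact_mod_cast hr
  have hδ0' : 0 < 2*(r:ℝ) - 4 := by linarith
  have hδ0 : 0 < δ := by rw [hδ]; exact one_div_pos.2 hδ0'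
  set out : Fin n → Finset (Fin n) := fun v => Finset.univ.filter (fun w => G v w) with hout
  have hdeg' : ∀ v, (1 - ε + γ) * n ≤ ((out v).card : ℝ) := by
    intro v
    have h1 : Set.ncard {w | G v w} = (out v).card := by
      rw [Set.ncard_eq_toFinset_card']; simp [Set.toFinset_setOf, hout]
    have h2 := hdeg v
    rw [h1] at h2
    exact h2
  set nonOut : Fin n → Finset (Fin n) := fun v => Finset.univ.filter (fun w => ¬ G v w)
    with hnonOut
  have houtsplit : ∀ v : Fin n, (out v).card + (nonOut v).card = n := by
    intro v
    rw [hout, hnonOut]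
    simpa using Finset.card_filter_add_card_filter_not (s := Finset.univ)
      (p := fun w => G v w)
  have hnonOutCard : ∀ v, ((nonOut v).card : ℝ) ≤ (ε - γ) * n := by
    intro v
    have h2 : ((out v).card : ℝ) + ((nonOut v).card : ℝ) = n := by exact_mod_cast houtsplit v
    have := hdeg' v
    linarith
  set inn : Fin n → Finset (Fin n) := fun u => Finset.univ.filter (fun w => G w u) with hinn
  set nonIn : Fin n → Finset (Fin n) := fun u => Finset.univ.filter (fun w => ¬ G w u)
    with hnonIn
  have hinsplit : ∀ u : Fin n, (inn u).card + (nonIn u).card = n := by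
    intro u
    rw [hinn, hnonIn]
    simpa using Finset.card_filter_add_card_filter_not (s := Finset.univ)
      (p := fun w => G w u)
  have hdouble : ∑ u, ((inn u).card) = ∑ v, ((out v).card) := by
    rw [hinn, hout]
    simp only [Finset.card_filter]
    rw [Finset.sum_comm]
  set B : Finset (Fin n) := Finset.univ.filter (fun u => ((inn u).card : ℝ) < (1 - δ) * n)
    with hB
  have hBcard : (B.card : ℝ) ≤ (ε - γ) * n / δ := by
    have h0 : ∀ u : Fin n, ((inn u).card : ℝ) ≤ n := by
      intro u
      have : (inn u).card ≤ n := by simpa using Finset.card_le_univ (inn u)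
      exact_mod_cast this
    have hsplit := Finset.sum_filter_add_sum_filter_not Finset.univ
      (fun u => ((inn u).card : ℝ) < (1 - δ) * n) (fun u => ((inn u).card : ℝ))
    have h1 : ∑ u ∈ B, ((inn u).card : ℝ) ≤ B.card * ((1 - δ) * n) := by
      rw [← nsmul_eq_mul]
      apply Finset.sum_le_card_nsmul
      intro u hu
      exact le_of_lt (Finset.mem_filter.1 hu).2
    have h2 : ∑ u ∈ Finset.univ.filter (fun u => ¬ (((inn u).card : ℝ) < (1 - δ) * n)),
        ((inn u).card : ℝ) ≤ ((Finset.univ.filter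
          (fun u => ¬ (((inn u).card : ℝ) < (1 - δ) * n))).card : ℝ) * n := by
      rw [← nsmul_eq_mul]
      apply Finset.sum_le_card_nsmul
      intro u _
      exact h0 u
    have hc : (B.card : ℕ) + (Finset.univ.filter
        (fun u => ¬ (((inn u).card : ℝ) < (1 - δ) * n))).card = n := by
      rw [hB]
      simpa using Finset.card_filter_add_card_filter_not (s := Finset.univ)
        (p := fun u => ((inn u).card : ℝ) < (1 - δ) * n)
    have hBn : B.card ≤ n := by simpa using Finset.card_le_univ B
    have hcc : ((Finset.univ.filter
        (fun u => ¬ (((inn u).card : ℝ) < (1 - δ) * n))).card : ℝ) = n - B.card := by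
      have hc2 : (Finset.univ.filter
          (fun u => ¬ (((inn u).card : ℝ) < (1 - δ) * n))).card = n - B.card := by omega
      rw [hc2, Nat.cast_sub hBn]
    have hlow : (n:ℝ) * ((1 - ε + γ) * n) ≤ ∑ u, ((inn u).card : ℝ) := by
      have he : ∑ u, ((inn u).card : ℝ) = ∑ v, ((out v).card : ℝ) := by exact_mod_cast hdouble
      rw [he]
      calc (n:ℝ) * ((1 - ε + γ) * n) = ∑ _v : Fin n, ((1 - ε + γ) * n) := by
            simp [mul_comm]
      _ ≤ ∑ v, ((out v).card : ℝ) := Finset.sum_le_sum fun v _ => hdeg' v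
    have hBn' : (B.card : ℝ) ≤ n := by exact_mod_cast hBn
    have hδB : (B.card : ℝ) * (δ * n) ≤ (ε - γ) * n * n := by nlinarith [hsplit, h1, h2]
    rw [le_div_iff₀ hδ0]
    have hn' : (0:ℝ) < n := by exact_mod_cast hn0
    nlinarith [hδB, hn']
  have hnonInCard : ∀ u, u ∉ B → ((nonIn u).card : ℝ) ≤ δ * n := by
    intro u hu
    have h1 : ¬ (((inn u).card : ℝ) < (1 - δ) * n) := by
      intro h
      exact hu (Finset.mem_filter.2 ⟨Finset.mem_univ u, h⟩)
    push_neg at h1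
    have h2 : ((inn u).card : ℝ) + ((nonIn u).card : ℝ) = n := by exact_mod_cast hinsplit u
    linarith
  -- membership helpers
  have hmemNonOut : ∀ a b : Fin n, b ∉ nonOut a → G a b := by
    intro a b h
    by_contra hg
    exact h (by rw [hnonOut]; exact Finset.mem_filter.2 ⟨Finset.mem_univ b, hg⟩)
  have hmemNonIn : ∀ a b : Fin n, b ∉ nonIn a → G b a := by
    intro a b h
    by_contra hg
    exact h (by rw [hnonIn]; exact Finset.mem_filter.2 ⟨Finset.mem_univ b, hg⟩)
  -- sorted order
  obtain ⟨σ, hσ⟩ := exists_sorted y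
  set ys : ℕ → ℝ := fun j => y (σ ⟨min j (n-1), by omega⟩) with hys
  have hysAnti : Antitone ys := by
    intro j j' hj
    exact hσ (by simp only [Fin.mk_le_mk]; omega)
  have hys_eq : ∀ (j : ℕ) (hj : j < n), ys j = y (σ ⟨j, hj⟩) := by
    intro j hj
    have he : (⟨min j (n-1), by omega⟩ : Fin n) = ⟨j, hj⟩ := by
      apply Fin.ext; simp; omega
    rw [hys]; simp only; rw [he]
  have ysum : ∑ j ∈ range n, ys j = ∑ v, y v := by
    rw [← Fin.sum_univ_eq_sum_range ys n, ← Equiv.sum_comp σ y]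
    apply Finset.sum_congr rfl
    intro i _
    rw [hys_eq i.1 i.2]
  set q : ℕ := n / r with hq
  have hq1 : 1 ≤ q := (Nat.one_le_div_iff (by omega)).2 hnr
  have hrq : r * q ≤ n := by
    rw [hq, Nat.mul_comm]
    exact Nat.div_mul_le_self n r
  have hqlt : (n:ℝ) < r * q + r := by
    have h1 : n % r < r := Nat.mod_lt n (by omega)
    have h2 : r * q + n % r = n := by rw [hq]; exact Nat.div_add_mod n r
    have h3 : n < r * q + r := by omega
    exact_mod_cast h3
  set v : Fin n := σ ⟨0, hn0⟩ with hv
  have hyv : ys 0 = y v := by rw [hys_eq 0 hn0]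
  -- greedy induction
  have main : ∀ i, i ≤ r - 1 → ∃ T : Finset (Fin n), T.card = i ∧ v ∉ T ∧
      (∀ u ∈ T, u ∉ B) ∧ (∀ u ∈ T, G v u) ∧ (∀ u ∈ T, ∀ w ∈ T, u ≠ w → G u w) ∧
      ∑ k ∈ range i, ys ((k+1)*q) ≤ ∑ u ∈ T, y u := by
    intro i
    induction i with
    | zero => exact fun _ => ⟨∅, by simp⟩
    | succ i ih =>
      intro hi1
      obtain ⟨T, hTcard, hvT, hTB, hTv, hTmut, hTsum⟩ := ih (by omega)
      set X : Finset (Fin n) := insert v (B ∪ nonOut v ∪ T.biUnion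
        (fun u => insert u (nonOut u ∪ nonIn u))) with hX
      have c1 : X.card ≤ 1 + (B.card + (nonOut v).card
          + ∑ u ∈ T, (1 + ((nonOut u).card + (nonIn u).card))) := by
        rw [hX]
        have d1 := Finset.card_insert_le v (B ∪ nonOut v ∪ T.biUnion
          (fun u => insert u (nonOut u ∪ nonIn u)))
        have d2 := Finset.card_union_le (B ∪ nonOut v)
          (T.biUnion (fun u => insert u (nonOut u ∪ nonIn u)))
        have d3 := Finset.card_union_le B (nonOut v)
        have d4 := Finset.card_biUnion_le (s := T)
          (t := fun u => insert u (nonOut u ∪ nonIn u))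
        have d5 : ∑ u ∈ T, (insert u (nonOut u ∪ nonIn u)).card
            ≤ ∑ u ∈ T, (1 + ((nonOut u).card + (nonIn u).card)) := by
          apply Finset.sum_le_sum
          intro u _
          have e1 := Finset.card_insert_le u (nonOut u ∪ nonIn u)
          have e2 := Finset.card_union_le (nonOut u) (nonIn u)
          omega
        omega
      have hXcard : (X.card : ℝ) ≤ 1 + ((ε-γ)*n/δ + (ε-γ)*n)
          + i * (1 + ((ε-γ)*n + δ*n)) := by
        have c2 : (X.card : ℝ) ≤ 1 + ((B.card : ℝ) + ((nonOut v).card : ℝ)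
            + ∑ u ∈ T, ((1:ℝ) + (((nonOut u).card : ℝ) + ((nonIn u).card : ℝ)))) := by
          exact_mod_cast c1
        have c3 : ∑ u ∈ T, ((1:ℝ) + (((nonOut u).card : ℝ) + ((nonIn u).card : ℝ)))
            ≤ ∑ _u ∈ T, ((1:ℝ) + ((ε-γ)*n + δ*n)) := by
          apply Finset.sum_le_sum
          intro u hu
          have e1 := hnonOutCard u
          have e2 := hnonInCard u (hTB u hu)
          linarith
        have c4 : ∑ _u ∈ T, ((1:ℝ) + ((ε-γ)*n + δ*n)) = i * (1 + ((ε-γ)*n + δ*n)) := by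
          rw [Finset.sum_const, hTcard, nsmul_eq_mul]
        have e3 := hnonOutCard v
        rw [c4] at c3
        have := hBcard
        linarith
      have hXq : X.card ≤ (i+1)*q := by
        have hb := numeric_core r q n γ hr hγ hqlt hnγ hn0 i (by omega)
        rw [← hε, ← hδ] at hb
        have : (X.card : ℝ) ≤ (((i+1)*q : ℕ) : ℝ) := le_trans hXcard hb
        exact_mod_cast this
      have hmlt : (i+1)*q < n := by
        have h3 : r - 1 + 1 = r := by omega
        calc (i+1)*q ≤ (r-1)*q := Nat.mul_le_mul_right q (by omega)
        _ < (r-1)*q + q := Nat.lt_add_of_pos_right (by omega)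
        _ = ((r-1)+1)*q := (Nat.succ_mul _ _).symm
        _ = r*q := by rw [h3]
        _ ≤ n := hrq
      obtain ⟨u, huX, huy⟩ := pick_lemma y σ hσ X ((i+1)*q) hmlt hXq
      have huv : u ≠ v := fun h => huX (by rw [hX, h]; exact Finset.mem_insert_self v _)
      have hrest : u ∉ B ∪ nonOut v ∪ T.biUnion (fun u => insert u (nonOut u ∪ nonIn u)) :=
        fun h => huX (by rw [hX]; exact Finset.mem_insert_of_mem h)
      have huB : u ∉ B :=
        fun h => hrest (Finset.mem_union_left _ (Finset.mem_union_left _ h))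
      have huNOv : u ∉ nonOut v :=
        fun h => hrest (Finset.mem_union_left _ (Finset.mem_union_right _ h))
      have huBi : ∀ w ∈ T, u ∉ insert w (nonOut w ∪ nonIn w) :=
        fun w hw h => hrest (Finset.mem_union_right _ (Finset.mem_biUnion.2 ⟨w, hw, h⟩))
      have huT : u ∉ T := fun h => (huBi u h) (Finset.mem_insert_self u _)
      have hGvu : G v u := hmemNonOut v u huNOv
      have hGwu : ∀ w ∈ T, G w u := fun w hw => hmemNonOut w u
        (fun h => huBi w hw (Finset.mem_insert_of_mem (Finset.mem_union_left _ h)))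
      have hGuw : ∀ w ∈ T, G u w := fun w hw => hmemNonIn w u
        (fun h => huBi w hw (Finset.mem_insert_of_mem (Finset.mem_union_right _ h)))
      refine ⟨insert u T, ?_, ?_, ?_, ?_, ?_, ?_⟩
      · rw [Finset.card_insert_of_notMem huT, hTcard]
      · intro h
        rcases Finset.mem_insert.1 h with h | h
        · exact huv h.symm
        · exact hvT h
      · intro a ha
        rcases Finset.mem_insert.1 ha with rfl | ha'
        · exact huB
        · exact hTB a ha'
      · intro a ha
        rcases Finset.mem_insert.1 ha with rfl | ha'
        · exact hGvu
        · exact hTv a ha'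
      · intro a ha b hb hab
        rcases Finset.mem_insert.1 ha with rfl | ha' <;>
          rcases Finset.mem_insert.1 hb with h | hb'
        · exact absurd h.symm hab
        · exact hGuw b hb'
        · subst h; exact hGwu a ha'
        · exact hTmut a ha' b hb' hab
      · rw [Finset.sum_insert huT, Finset.sum_range_succ]
        have huy' : ys ((i+1)*q) ≤ y u := by
          rw [hys_eq ((i+1)*q) hmlt]
          exact huy
        linarith [hTsum]
  -- assemble the final clique
  obtain ⟨T, hTcard, hvT, hTB, hTv, hTmut, hTsum⟩ := main (r-1) le_rfl
  have hScard : (insert v T).card = r := by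
    rw [Finset.card_insert_of_notMem hvT, hTcard]
    omega
  have hsumS : ∑ k ∈ range r, ys (k*q) ≤ ∑ u ∈ insert v T, y u := by
    rw [Finset.sum_insert hvT]
    have h1 : r = (r-1)+1 := by omega
    rw [h1, Finset.sum_range_succ']
    have h0 : ys (0*q) = y v := by rw [Nat.zero_mul, hyv]
    rw [h0]
    linarith [hTsum]
  have hpos : 0 < ∑ k ∈ range r, ys (k*q) :=
    sorted_pos ys hysAnti hq1 (by omega) hrq (by rw [ysum]; exact hy)
  refine ⟨insert v T, ⟨hScard, ?_, ?_⟩, by linarith⟩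
  · intro a ha b hb hab
    rcases Finset.mem_insert.1 ha with rfl | ha' <;>
      rcases Finset.mem_insert.1 hb with h | hb'
    · exact absurd h.symm hab
    · exact Or.inl (hTv b hb')
    · subst h; exact Or.inr (hTv a ha')
    · exact Or.inl (hTmut a ha' b hb' hab)
  · intro x hx
    rcases Finset.mem_insert.1 hx with rfl | hx'
    · have hsub : (↑T : Set (Fin n)) ⊆ {z | z ∈ insert v T ∧ G v z} := by
        intro z hz
        exact ⟨Finset.mem_insert_of_mem hz, hTv z hz⟩
      have h1 := Set.ncard_le_ncard hsub (Set.toFinite _)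
      rw [Set.ncard_coe_finset, hTcard] at h1
      omega
    · have hsub : (↑(T.erase x) : Set (Fin n)) ⊆ {z | z ∈ insert v T ∧ G x z} := by
        intro z hz
        have hz' := Finset.mem_erase.1 hz
        exact ⟨Finset.mem_insert_of_mem hz'.2, hTmut x hx' z hz'.2 (Ne.symm hz'.1)⟩
      have h1 := Set.ncard_le_ncard hsub (Set.toFinite _)
      rw [Set.ncard_coe_finset, Finset.card_erase_of_mem hx', hTcard] at h1
      omega

set_option maxHeartbeats 2000000 in
open Classical in
/-- For `r ≥ 5` and `γ > 0`, every sufficiently large digraph with minimum out-degree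
at least `(1 - 1/((2r-3)r) + γ)n` has a perfect fractional `(r, r-2)`-tiling. -/
theorem stmt_6 (r : ℕ) (γ : ℝ) (hr : 5 ≤ r) (hγ : 0 < γ) :
    ∃ n₀ : ℕ, ∀ n, n₀ ≤ n → ∀ G : Fin n → Fin n → Prop, (∀ v, ¬ G v v) →
      (∀ v : Fin n, (1 - 1 / ((2 * (r : ℝ) - 3) * r) + γ) * n ≤ (Set.ncard {w | G v w} : ℝ)) →
      ∃ ω : Finset (Fin n) → ℝ,
        (∀ S, 0 ≤ ω S ∧ ω S ≤ 1) ∧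
        (∀ S, ω S ≠ 0 → IsKrs G r (r - 2) S) ∧
        (∀ v : Fin n, ∑ S ∈ Finset.univ.filter (fun S => v ∈ S), ω S = 1) := by
  refine ⟨max r (Nat.ceil ((2*(r:ℝ))/γ)) + 1, ?_⟩
  intro n hn G hirr hdeg
  have hnr : r ≤ n := by
    have := le_max_left r (Nat.ceil ((2*(r:ℝ))/γ))
    omega
  have hn0 : 0 < n := by omega
  have hr0 : (0:ℝ) < r := by
    have : 0 < r := by omega
    exact_mod_cast this
  have hn0' : (0:ℝ) < n := by exact_mod_cast hn0
  have hnγ : 2*(r:ℝ) ≤ γ * n := by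
    have h1 : Nat.ceil ((2*(r:ℝ))/γ) ≤ n := by
      have := le_max_right r (Nat.ceil ((2*(r:ℝ))/γ))
      omega
    have h2 : (2*(r:ℝ))/γ ≤ (Nat.ceil ((2*(r:ℝ))/γ) : ℝ) := Nat.le_ceil _
    have h3 : ((Nat.ceil ((2*(r:ℝ))/γ) : ℕ) : ℝ) ≤ n := by exact_mod_cast h1
    have h4 : (2*(r:ℝ))/γ ≤ n := le_trans h2 h3
    calc 2*(r:ℝ) = ((2*(r:ℝ))/γ) * γ := by field_simp
    _ ≤ (n:ℝ) * γ := mul_le_mul_of_nonneg_right h4 hγ.le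
    _ = γ * n := mul_comm _ _
  set Kr : Finset (Finset (Fin n)) := Finset.univ.filter (fun S => IsKrs G r (r-2) S) with hKr
  set χ : Finset (Fin n) → (Fin n → ℝ) := fun S v => if v ∈ S then 1 else 0 with hχ
  have hχinj : Function.Injective χ := by
    intro S S' h
    ext a
    have h1 := congrFun h a
    simp only [hχ] at h1
    by_cases ha : a ∈ S <;> by_cases ha' : a ∈ S' <;> simp [ha, ha'] at h1 ⊢
  set D : Finset (Fin n → ℝ) := Kr.image χ with hD
  have hχsum : ∀ S : Finset (Fin n), χ S = ∑ v ∈ S, Pi.single v (1:ℝ) := by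
    intro S
    funext a
    rw [Finset.sum_apply]
    simp only [hχ, Pi.single_apply]
    rw [Finset.sum_ite_eq S a (fun _ => (1:ℝ))]
  have hone : (∑ v : Fin n, Pi.single v (1:ℝ)) = fun _ => (1:ℝ) := by
    funext a
    rw [Finset.sum_apply]
    simp [Pi.single_apply]
  have hmem : (fun _ => (r:ℝ)/n) ∈ convexHull ℝ (D : Set (Fin n → ℝ)) := by
    by_contra hnotin
    obtain ⟨f, u, hfp, hfD⟩ := geometric_hahn_banach_point_closed
      (convex_convexHull ℝ _) (((D : Set (Fin n → ℝ)).toFinite.isCompact_convexHull ℝ).isClosed)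
      hnotin
    set z : Fin n → ℝ := fun v => u/r - f (Pi.single v 1) with hz
    have hfχ : ∀ S : Finset (Fin n), f (χ S) = ∑ v ∈ S, f (Pi.single v 1) := by
      intro S
      rw [hχsum, map_sum]
    have hSz : ∀ S ∈ Kr, ∑ v ∈ S, z v < 0 := by
      intro S hS
      have hcard : S.card = r := (Finset.mem_filter.1 hS).2.1
      have hsz : ∑ v ∈ S, z v = S.card * (u/r) - f (χ S) := by
        rw [hfχ, Finset.sum_sub_distrib, Finset.sum_const, nsmul_eq_mul]
      have hu : u < f (χ S) := by
        apply hfD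
        exact subset_convexHull ℝ (D : Set (Fin n → ℝ))
          (Finset.mem_coe.2 (Finset.mem_image_of_mem χ hS))
      rw [hsz, hcard]
      have hru : (r:ℝ) * (u/r) = u := by field_simp
      rw [hru]
      linarith
    have hzsum : 0 < ∑ v, z v := by
      have h1 : ∑ v, z v = n * (u/r) - f (fun _ => (1:ℝ)) := by
        rw [hz]
        simp only
        rw [Finset.sum_sub_distrib, Finset.sum_const, nsmul_eq_mul, ← map_sum, hone]
        simp
      have hpsc : (fun _ : Fin n => (r:ℝ)/n) = ((r:ℝ)/n) • (fun _ : Fin n => (1:ℝ)) := by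
        funext a
        simp
      have h2 : f (fun _ : Fin n => (r:ℝ)/n) = ((r:ℝ)/n) * f (fun _ : Fin n => (1:ℝ)) := by
        rw [hpsc, map_smul, smul_eq_mul]
      have h3 : ((r:ℝ)/n) * f (fun _ : Fin n => (1:ℝ)) < u := by rw [← h2]; exact hfp
      have h4 : f (fun _ : Fin n => (1:ℝ)) < u * n / r := by
        have h3' : ((r:ℝ)/n) * f (fun _ : Fin n => (1:ℝ)) * n < u * n :=
          mul_lt_mul_of_pos_right h3 hn0'
        have he : ((r:ℝ)/n) * f (fun _ : Fin n => (1:ℝ)) * n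
            = f (fun _ : Fin n => (1:ℝ)) * r := by
          field_simp
        rw [lt_div_iff₀ hr0, ← he]
        exact h3'
      rw [h1]
      have : (n:ℝ) * (u/r) = u * n / r := by ring
      linarith [this]
    obtain ⟨S, hSK, hSpos⟩ := key r γ hr hγ G hdeg hnr hnγ z hzsum
    have hSKr : S ∈ Kr := Finset.mem_filter.2 ⟨Finset.mem_univ S, hSK⟩
    linarith [hSz S hSKr]
  rw [Finset.convexHull_eq] at hmem
  obtain ⟨w, hw0, hw1, hwc⟩ := hmem
  have hcm : ∑ x ∈ D, w x • x = (fun _ => (r:ℝ)/n) := by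
    have h := Finset.centerMass_eq_of_sum_1 D id hw1
    rw [hwc] at h
    simpa [id] using h.symm
  set ω : Finset (Fin n) → ℝ := fun S => if S ∈ Kr then (n/r) * w (χ S) else 0 with hω
  have hω0 : ∀ S, 0 ≤ ω S := by
    intro S
    rw [hω]
    simp only
    split
    · rename_i hS
      have : 0 ≤ w (χ S) := hw0 _ (Finset.mem_coe.2 (Finset.mem_image_of_mem χ hS))
      positivity
    · exact le_rfl
  have hcov : ∀ v : Fin n, ∑ S ∈ Finset.univ.filter (fun S => v ∈ S), ω S = 1 := by
    intro v
    have h2 : ∑ x ∈ D, w x * x v = (r:ℝ)/n := by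
      have := congrFun hcm v
      rw [Finset.sum_apply] at this
      simpa using this
    have h3 : ∑ x ∈ D, w x * x v = ∑ S ∈ Kr, w (χ S) * χ S v := by
      rw [hD]
      rw [Finset.sum_image (fun a _ b _ h => hχinj h)]
    have h4 : ∑ S ∈ Kr, w (χ S) * χ S v = ∑ S ∈ Kr.filter (fun S => v ∈ S), w (χ S) := by
      conv_rhs => rw [Finset.sum_filter]
      apply Finset.sum_congr rfl
      intro S _
      by_cases hv : v ∈ S <;> simp [hχ, hv]
    have h6 : (Finset.univ.filter (fun S => v ∈ S)).filter (fun S => S ∈ Kr)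
        = Kr.filter (fun S => v ∈ S) := by
      ext S
      simp only [Finset.mem_filter, Finset.mem_univ, true_and]
      tauto
    have h5 : ∑ S ∈ Finset.univ.filter (fun S => v ∈ S), ω S
        = ∑ S ∈ Kr.filter (fun S => v ∈ S), (n/r) * w (χ S) := by
      rw [← Finset.sum_filter_of_ne (p := fun S => S ∈ Kr)
        (fun S _ hne => by by_contra hk; exact hne (by simp only [hω]; rw [if_neg hk]))]
      rw [h6]
      apply Finset.sum_congr rfl
      intro S hS
      have hSK : S ∈ Kr := (Finset.mem_filter.1 hS).1
      simp only [hω]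
      rw [if_pos hSK]
    rw [h5, ← Finset.mul_sum, ← h4, ← h3, h2]
    field_simp
  refine ⟨ω, fun S => ⟨hω0 S, ?_⟩, fun S hS => ?_, hcov⟩
  · by_cases hS : S ∈ Kr
    · have hcard : S.card = r := (Finset.mem_filter.1 hS).2.1
      have hne : S.Nonempty := Finset.card_pos.1 (by omega)
      obtain ⟨v, hv⟩ := hne
      have hmemf : S ∈ Finset.univ.filter (fun S' => v ∈ S') :=
        Finset.mem_filter.2 ⟨Finset.mem_univ S, hv⟩
      have := Finset.single_le_sum (f := ω) (fun S' _ => hω0 S') hmemf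
      rw [hcov v] at this
      exact this
    · rw [hω]
      simp only
      rw [if_neg hS]
      norm_num
  · by_cases hSK : S ∈ Kr
    · exact (Finset.mem_filter.1 hSK).2
    · exfalso
      apply hS
      rw [hω]
      simp only
      rw [if_neg hSK]
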